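/- Let p, q, r ≥ 2 be real numbers with p² + q² + r² − pqr ≤ 4, let λ be the unique positive eigenvalue of the symmetric matrix à with diagonal 2 and off-diagonal entries p = Ã_{lm}, q = Ã_{ln}, r = Ã_{mn} (indices {l,m,n}={1,2,3}), let α_p = (p+√(p²−4))/2, and let v be the positive eigenvector given by v_l = (λ−2)² + (p+q)(λ−2) + pr + qr − r² and v_m = (λ−2)² + (p+r)(λ−2) + pq + rq − q². Then α_p·v_l − v_m ≥ 0. -/

import Mathlib

set_option maxHeartbeats 1600000

open Matrix

theorem alpha_v_inequality (p q r : ℝ) (hp : 2 ≤ p) (hq : 2 ≤ q) (hr : 2 ≤ r)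
    (hC : p ^ 2 + q ^ 2 + r ^ 2 - p * q * r ≤ 4)
    (lam : ℝ) (hlam : 0 < lam)
    (heig : (lam • (1 : Matrix (Fin 3) (Fin 3) ℝ) -
        !![2, p, q; p, 2, r; q, r, 2]).det = 0) :
    ((p + Real.sqrt (p ^ 2 - 4)) / 2) *
        ((lam - 2) ^ 2 + (p + q) * (lam - 2) + p * r + q * r - r ^ 2) -
      ((lam - 2) ^ 2 + (p + r) * (lam - 2) + p * q + r * q - q ^ 2) ≥ 0 := by
  have ha : (0:ℝ) ≤ p - 2 := by linarith
  have hb : (0:ℝ) ≤ q - 2 := by linarith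
  have hc : (0:ℝ) ≤ r - 2 := by linarith
  have hk : (0:ℝ) ≤ p*q*r - (p^2 + q^2 + r^2) + 4 := by linarith
  have hp4 : (0:ℝ) ≤ p^2 - 4 := by nlinarith
  have ht0 : 0 ≤ Real.sqrt (p^2 - 4) := Real.sqrt_nonneg _
  have ht2 : (Real.sqrt (p^2 - 4))^2 = p^2 - 4 := Real.sq_sqrt hp4
  set t := Real.sqrt (p^2 - 4) with htdef
  set μ := lam - 2 with hμdef
  have hcubic : μ^3 - (p^2+q^2+r^2)*μ - 2*p*q*r = 0 := by
    simp only [hμdef]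
    simp [Matrix.det_fin_three, Matrix.smul_apply, Matrix.sub_apply, Matrix.one_apply] at heig
    linear_combination heig
  have hμm2 : -2 < μ := by simp only [hμdef]; linarith
  have hμpos : 0 < μ := by
    rcases lt_or_ge 0 μ with h|h
    · exact h
    · exfalso
      nlinarith [hcubic, hk, mul_nonneg (show (0:ℝ) ≤ μ + 2 by linarith)
          (show (0:ℝ) ≤ p^2 + q^2 + r^2 - 12 by nlinarith),
        mul_pos (mul_pos (show (0:ℝ) < μ + 2 by linarith) (show (0:ℝ) < μ + 2 by linarith))
          (show (0:ℝ) < 4 - μ by linarith)]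
  have hμ2s : p^2 + q^2 + r^2 < μ^2 := by
    nlinarith [hcubic, hμpos, mul_pos (mul_pos (show (0:ℝ) < p by linarith)
      (show (0:ℝ) < q by linarith)) (show (0:ℝ) < r by linarith)]
  have hμr : r < μ := by nlinarith [hμ2s, hμpos]
  have hμq : q < μ := by nlinarith [hμ2s, hμpos]
  have hA : 0 < (μ + r) * (μ + p + q - r) :=
    mul_pos (by linarith) (by linarith)
  have hB : 0 < (μ + q) * (μ + p + r - q) :=
    mul_pos (by linarith) (by linarith)
  have hc2 : (0:ℝ) ≤ 2*p^3 + 2*p^2*q + 2*p^2*r - 4*p^2 + 3*p*q*r - 4*p*q - 4*p*r - 1*q^2 - 4*q*r - 1*r^2 := by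
    linarith [hk, mul_nonneg (mul_nonneg (pow_nonneg ha 1) (pow_nonneg hb 0)) (pow_nonneg hc 0), mul_nonneg (mul_nonneg (pow_nonneg ha 1) (pow_nonneg hb 0)) (pow_nonneg hc 1), mul_nonneg (mul_nonneg (pow_nonneg ha 1) (pow_nonneg hb 1)) (pow_nonneg hc 0), mul_nonneg (mul_nonneg (pow_nonneg ha 1) (pow_nonneg hb 1)) (pow_nonneg hc 1), mul_nonneg (mul_nonneg (pow_nonneg ha 2) (pow_nonneg hb 0)) (pow_nonneg hc 0), mul_nonneg (mul_nonneg (pow_nonneg ha 2) (pow_nonneg hb 0)) (pow_nonneg hc 1), mul_nonneg (mul_nonneg (pow_nonneg ha 2) (pow_nonneg hb 1)) (pow_nonneg hc 0), mul_nonneg (mul_nonneg (pow_nonneg ha 3) (pow_nonneg hb 0)) (pow_nonneg hc 0)]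
  have hc1 : (0:ℝ) ≤ 2*p^4 + 2*p^3*q + 2*p^3*r - 4*p^3 + 2*p^2*q^2 + 4*p^2*q*r - 4*p^2*q + 2*p^2*r^2 - 4*p^2*r + 2*p*q^2*r - 2*p*q^2 + 2*p*q*r^2 - 12*p*q*r - 2*p*r^2 - 2*q^3 - 2*q^2*r - 2*q*r^2 - 2*r^3 := by
    linarith [hk, mul_nonneg (mul_nonneg (pow_nonneg hb 1) (pow_nonneg hc 0)) hk, mul_nonneg (mul_nonneg (pow_nonneg hb 0) (pow_nonneg hc 1)) hk, mul_nonneg (mul_nonneg (pow_nonneg ha 1) (pow_nonneg hb 0)) (pow_nonneg hc 0), mul_nonneg (mul_nonneg (pow_nonneg ha 1) (pow_nonneg hb 0)) (pow_nonneg hc 1), mul_nonneg (mul_nonneg (pow_nonneg ha 1) (pow_nonneg hb 0)) (pow_nonneg hc 2), mul_nonneg (mul_nonneg (pow_nonneg ha 1) (pow_nonneg hb 1)) (pow_nonneg hc 0), mul_nonneg (mul_nonneg (pow_nonneg ha 1) (pow_nonneg hb 1)) (pow_nonneg hc 1), mul_nonneg (mul_nonneg (pow_nonneg ha 1) (pow_nonneg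 hb 2)) (pow_nonneg hc 0), mul_nonneg (mul_nonneg (pow_nonneg ha 2) (pow_nonneg hb 0)) (pow_nonneg hc 0), mul_nonneg (mul_nonneg (pow_nonneg ha 2) (pow_nonneg hb 0)) (pow_nonneg hc 1), mul_nonneg (mul_nonneg (pow_nonneg ha 2) (pow_nonneg hb 0)) (pow_nonneg hc 2), mul_nonneg (mul_nonneg (pow_nonneg ha 2) (pow_nonneg hb 1)) (pow_nonneg hc 0), mul_nonneg (mul_nonneg (pow_nonneg ha 2) (pow_nonneg hb 1)) (pow_nonneg hc 1), mul_nonneg (mul_nonneg (pow_nonneg ha 2) (pow_nonneg hb 2)) (pow_nonneg hc 0), mul_nonneg (mul_nonneg (pow_nonneg ha 3) (pow_nonneg hb 0)) (pow_nonneg hc 0), mul_nonneg (mul_nonneg (pow_nonneg ha 3) (pow_nonneg hb 0)) (pow_nonneg hc 1), mul_nonneg (mul_nonneg (pow_nonneg ha 3) (pow_nonneg hb 1)) (pow_nonneg hc 0), mul_nonneg (mul_nonneg (pow_nonneg ha 4) (pow_nonneg hb 0)) (pow_nonneg hc 0)]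
  have hc3 : (0:ℝ) ≤ (2*p^3 + 2*p^2*q + 2*p^2*r - 4*p^2 + 3*p*q*r - 4*p*q - 4*p*r - 1*q^2 - 4*q*r - 1*r^2) * (p^2+q^2+r^2) + (5*p^3*q*r + 2*p^2*q^2*r - 1*p^2*q^2 + 2*p^2*q*r^2 - 8*p^2*q*r - 1*p^2*r^2 - 1*p*q^3*r + 2*p*q^3 + 2*p*q^2*r^2 - 6*p*q^2*r - 1*p*q*r^3 - 6*p*q*r^2 + 2*p*r^3 - 1*q^4 + 2*q^3*r - 2*q^2*r^2 + 2*q*r^3 - 1*r^4) := by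
    linarith [mul_nonneg (mul_nonneg (pow_nonneg hb 0) (pow_nonneg hc 0)) hk, mul_nonneg (mul_nonneg (pow_nonneg hb 1) (pow_nonneg hc 0)) hk, mul_nonneg (mul_nonneg (pow_nonneg hb 0) (pow_nonneg hc 1)) hk, mul_nonneg (mul_nonneg (pow_nonneg hb 2) (pow_nonneg hc 0)) hk, mul_nonneg (mul_nonneg (pow_nonneg hb 0) (pow_nonneg hc 2)) hk, mul_nonneg (mul_nonneg (pow_nonneg hb 1) (pow_nonneg hc 1)) hk, mul_nonneg (mul_nonneg (pow_nonneg ha 1) (pow_nonneg hb 0)) (pow_nonneg hc 0), mul_nonneg (mul_nonneg (pow_nonneg ha 1) (pow_nonneg hb 0)) (pow_nonneg hc 1), mul_nonneg (mul_nonneg (pow_nonneg ha 1) (pow_nonneg hb 0)) (pow_nonneg hc 2), mul_nonneg (mul_nonneg (pow_nonneg ha 1) (pow_nonneg hb 0)) (pow_nonneg hc 3), mul_nonneg (mul_nonneg (pow_nonneg ha 1) (pow_nonneg hb 1)) (pow_nonneg hc 0), mul_nonneg (mul_nonneg (pow_nonneg ha 1) (pow_nonneg hb 1)) (pow_nonneg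 hc 1), mul_nonneg (mul_nonneg (pow_nonneg ha 1) (pow_nonneg hb 1)) (pow_nonneg hc 2), mul_nonneg (mul_nonneg (pow_nonneg ha 1) (pow_nonneg hb 2)) (pow_nonneg hc 0), mul_nonneg (mul_nonneg (pow_nonneg ha 1) (pow_nonneg hb 2)) (pow_nonneg hc 1), mul_nonneg (mul_nonneg (pow_nonneg ha 1) (pow_nonneg hb 3)) (pow_nonneg hc 0), mul_nonneg (mul_nonneg (pow_nonneg ha 2) (pow_nonneg hb 0)) (pow_nonneg hc 0), mul_nonneg (mul_nonneg (pow_nonneg ha 2) (pow_nonneg hb 0)) (pow_nonneg hc 1), mul_nonneg (mul_nonneg (pow_nonneg ha 2) (pow_nonneg hb 0)) (pow_nonneg hc 2), mul_nonneg (mul_nonneg (pow_nonneg ha 2) (pow_nonneg hb 0)) (pow_nonneg hc 3), mul_nonneg (mul_nonneg (pow_nonneg ha 2) (pow_nonneg hb 1)) (pow_nonneg hc 0), mul_nonneg (mul_nonneg (pow_nonneg ha 2) (pow_nonneg hb 1)) (pow_nonneg hc 1), mul_nonneg (mul_nonneg (pow_nonneg ha 2) (pow_nonneg hb 1)) (pow_nonneg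 hc 2), mul_nonneg (mul_nonneg (pow_nonneg ha 2) (pow_nonneg hb 2)) (pow_nonneg hc 0), mul_nonneg (mul_nonneg (pow_nonneg ha 2) (pow_nonneg hb 2)) (pow_nonneg hc 1), mul_nonneg (mul_nonneg (pow_nonneg ha 2) (pow_nonneg hb 3)) (pow_nonneg hc 0), mul_nonneg (mul_nonneg (pow_nonneg ha 3) (pow_nonneg hb 0)) (pow_nonneg hc 0), mul_nonneg (mul_nonneg (pow_nonneg ha 3) (pow_nonneg hb 0)) (pow_nonneg hc 1), mul_nonneg (mul_nonneg (pow_nonneg ha 3) (pow_nonneg hb 0)) (pow_nonneg hc 2), mul_nonneg (mul_nonneg (pow_nonneg ha 3) (pow_nonneg hb 1)) (pow_nonneg hc 0), mul_nonneg (mul_nonneg (pow_nonneg ha 3) (pow_nonneg hb 1)) (pow_nonneg hc 1), mul_nonneg (mul_nonneg (pow_nonneg ha 3) (pow_nonneg hb 2)) (pow_nonneg hc 0), mul_nonneg (mul_nonneg (pow_nonneg ha 4) (pow_nonneg hb 0)) (pow_nonneg hc 0), mul_nonneg (mul_nonneg (pow_nonneg ha 4) (pow_nonneg hb 0)) (pow_nonneg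 hc 1), mul_nonneg (mul_nonneg (pow_nonneg ha 4) (pow_nonneg hb 1)) (pow_nonneg hc 0), mul_nonneg (mul_nonneg (pow_nonneg ha 5) (pow_nonneg hb 0)) (pow_nonneg hc 0)]
  have hEq : p * ((μ + r) * (μ + p + q - r)) * ((μ + q) * (μ + p + r - q))
      - ((μ + r) * (μ + p + q - r))^2 - ((μ + q) * (μ + p + r - q))^2
      = (2*p^3 + 2*p^2*q + 2*p^2*r - 4*p^2 + 3*p*q*r - 4*p*q - 4*p*r - 1*q^2 - 4*q*r - 1*r^2) * μ^2 + (2*p^4 + 2*p^3*q + 2*p^3*r - 4*p^3 + 2*p^2*q^2 + 4*p^2*q*r - 4*p^2*q + 2*p^2*r^2 - 4*p^2*r + 2*p*q^2*r - 2*p*q^2 + 2*p*q*r^2 - 12*p*q*r - 2*p*r^2 - 2*q^3 - 2*q^2*r - 2*q*r^2 - 2*r^3) * μ + (5*p^3*q*r + 2*p^2*q^2*r - 1*p^2*q^2 + 2*p^2*q*r^2 - 8*p^2*q*r - 1*p^2*r^2 - 1*p*q^3*r + 2*p*q^3 + 2*p*q^2*r^2 - 6*p*q^2*r - 1*p*q*r^3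 - 6*p*q*r^2 + 2*p*r^3 - 1*q^4 + 2*q^3*r - 2*q^2*r^2 + 2*q*r^3 - 1*r^4) := by
    linear_combination (1*μ*p - 2*μ + 2*p^2 + 1*p*q + 1*p*r - 4*p - 2*q - 2*r) * hcubic
  have hE : (0:ℝ) ≤ p * ((μ + r) * (μ + p + q - r)) * ((μ + q) * (μ + p + r - q))
      - ((μ + r) * (μ + p + q - r))^2 - ((μ + q) * (μ + p + r - q))^2 := by
    rw [hEq]
    have h1 : (0:ℝ) ≤ (2*p^3 + 2*p^2*q + 2*p^2*r - 4*p^2 + 3*p*q*r - 4*p*q - 4*p*r - 1*q^2 - 4*q*r - 1*r^2) * (μ^2 - (p^2+q^2+r^2)) :=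
      mul_nonneg hc2 (by linarith)
    have h2 : (0:ℝ) ≤ (2*p^4 + 2*p^3*q + 2*p^3*r - 4*p^3 + 2*p^2*q^2 + 4*p^2*q*r - 4*p^2*q + 2*p^2*r^2 - 4*p^2*r + 2*p*q^2*r - 2*p*q^2 + 2*p*q*r^2 - 12*p*q*r - 2*p*r^2 - 2*q^3 - 2*q^2*r - 2*q*r^2 - 2*r^3) * μ := mul_nonneg hc1 hμpos.le
    linarith
  set A := (μ + r) * (μ + p + q - r) with hAdef
  set B := (μ + q) * (μ + p + r - q) with hBdef
  have hgoal : 0 ≤ t * A - (2*B - p*A) := by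
    rcases le_or_gt (2*B - p*A) 0 with h|h
    · have := mul_nonneg ht0 hA.le
      linarith
    · by_contra hneg
      push_neg at hneg
      have h2 : 0 < t*A + (2*B - p*A) := by
        have := mul_nonneg ht0 hA.le
        linarith
      have h3 : (t*A - (2*B - p*A)) * (t*A + (2*B - p*A))
          = 4 * (p * A * B - A^2 - B^2) := by
        linear_combination (A^2) * ht2
      have h4 := mul_neg_of_neg_of_pos hneg h2
      rw [h3] at h4
      linarith [hE]
  have hfinal : ((p + t) / 2) * (μ ^ 2 + (p + q) * μ + p * r + q * r - r ^ 2)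
      - (μ ^ 2 + (p + r) * μ + p * q + r * q - q ^ 2)
      = (t * A - (2*B - p*A)) / 2 := by
    rw [hAdef, hBdef]; ring
  have hgoal2 : 0 ≤ ((p + t) / 2) * (μ ^ 2 + (p + q) * μ + p * r + q * r - r ^ 2)
      - (μ ^ 2 + (p + r) * μ + p * q + r * q - q ^ 2) := by
    rw [hfinal]; linarith
  calc (0:ℝ) ≤ _ := hgoal2
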